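/- Let 𝒫 be a finite set of subsets of ℝ^d and let T₁ be a tiling of ℝ^d with prototile set 𝒫. (i) For every real ε with 0 < ε < 1/√2 there exist r' > 0 and ε' > 0 such that every tiling T' with prototile set 𝒫 satisfying d_{r'}(T₁,T') < ε' also satisfies d(T₁,T') < ε. (ii) For every r > 0 and every real ε > 0 there exists ε' > 0 such that every tiling T' with prototile set 𝒫 satisfying d(T₁,T') < ε' also satisfies d_r(T₁,T') < ε. Consequently, on any set of tilings of ℝ^d with prototile set 𝒫, the families {N_{r,ε}(T)} (for d_r) and the d-balls are equivalent neighborhood bases at every point. -/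

import Mathlib

open ENNReal

noncomputable section

/-- Translation of a tiling: `T + u = {t + u | t ∈ T}`. -/
def transTiling {d : ℕ} (T : Set (Set (EuclideanSpace ℝ (Fin d))))
    (u : EuclideanSpace ℝ (Fin d)) : Set (Set (EuclideanSpace ℝ (Fin d))) :=
  (fun s => (fun p => p + u) '' s) '' T

/-- `T ⊓ A = {t ∈ T | t ∩ A ≠ ∅}`, the tiles of `T` meeting `A`. -/
def meetsTiles {d : ℕ} (T : Set (Set (EuclideanSpace ℝ (Fin d))))
    (A : Set (EuclideanSpace ℝ (Fin d))) : Set (Set (EuclideanSpace ℝ (Fin d))) :=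
  {t ∈ T | (t ∩ A).Nonempty}

/-- `T` is a tiling of `ℝ^d` with prototile set `P`. -/
def IsTiling {d : ℕ} (P : Set (Set (EuclideanSpace ℝ (Fin d))))
    (T : Set (Set (EuclideanSpace ℝ (Fin d)))) : Prop :=
  (∀ t ∈ T, ∃ τ ∈ P, ∃ x : EuclideanSpace ℝ (Fin d), t = (fun p => p + x) '' τ) ∧
  (∀ t ∈ T, Nonempty
    (t ≃ₜ (Metric.closedBall (0 : EuclideanSpace ℝ (Fin d)) 1 : Set (EuclideanSpace ℝ (Fin d))))) ∧
  (⋃₀ T = Set.univ) ∧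
  (∀ t₁ ∈ T, ∀ t₂ ∈ T, t₁ ≠ t₂ → interior t₁ ∩ interior t₂ = ∅)

/-- `d_r(T₁,T₂)`: the infimum of all `ε > 0` such that some `u` with `‖u‖ < ε` satisfies
`(T₁+u) ⊓ B̄_r = T₂ ⊓ B̄_r`, taken in `[0,∞]` (so `= ∞` if there is no such `ε`). -/
def tilingDr {d : ℕ} (r : ℝ) (T₁ T₂ : Set (Set (EuclideanSpace ℝ (Fin d)))) : ℝ≥0∞ :=
  ⨅ (ε : ℝ) (_ : 0 < ε ∧ ∃ u : EuclideanSpace ℝ (Fin d), ‖u‖ < ε ∧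
      meetsTiles (transTiling T₁ u) (Metric.closedBall 0 r)
        = meetsTiles T₂ (Metric.closedBall 0 r)),
    ENNReal.ofReal ε

/-- The Sadun tiling metric `d(T,T') = inf({1/√2} ∪ {ε > 0 | ∃ u v, |u|,|v| < ε and
`(T+u) ⊓ B(0,1/ε) = (T'+v) ⊓ B(0,1/ε)`})`. -/
def tilingMetric {d : ℕ} (T T' : Set (Set (EuclideanSpace ℝ (Fin d)))) : ℝ :=
  sInf ({1 / Real.sqrt 2} ∪
    {ε : ℝ | 0 < ε ∧ ∃ u v : EuclideanSpace ℝ (Fin d), ‖u‖ < ε ∧ ‖v‖ < ε ∧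
      meetsTiles (transTiling T u) (Metric.ball 0 (1 / ε))
        = meetsTiles (transTiling T' v) (Metric.ball 0 (1 / ε))})


lemma meetsTiles_restrict {d : ℕ} {S S' : Set (Set (EuclideanSpace ℝ (Fin d)))}
    {A B : Set (EuclideanSpace ℝ (Fin d))} (hAB : A ⊆ B)
    (h : meetsTiles S B = meetsTiles S' B) : meetsTiles S A = meetsTiles S' A := by
  ext t
  constructor
  · rintro ⟨ht, x, hx1, hx2⟩
    have htB : t ∈ meetsTiles S' B := h ▸ (⟨ht, x, hx1, hAB hx2⟩ : t ∈ meetsTiles S B)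
    exact ⟨htB.1, x, hx1, hx2⟩
  · rintro ⟨ht, x, hx1, hx2⟩
    have htB : t ∈ meetsTiles S B := h.symm ▸ (⟨ht, x, hx1, hAB hx2⟩ : t ∈ meetsTiles S' B)
    exact ⟨htB.1, x, hx1, hx2⟩

lemma transTiling_transTiling {d : ℕ} (S : Set (Set (EuclideanSpace ℝ (Fin d))))
    (a b : EuclideanSpace ℝ (Fin d)) :
    transTiling (transTiling S a) b = transTiling S (a + b) := by
  unfold transTiling
  rw [← Set.image_comp]
  congr 1
  funext s
  simp only [Function.comp, Set.image_image, add_assoc]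

lemma transTiling_zero {d : ℕ} (S : Set (Set (EuclideanSpace ℝ (Fin d)))) :
    transTiling S 0 = S := by
  simp [transTiling]

lemma transTiling_inj {d : ℕ} {S S' : Set (Set (EuclideanSpace ℝ (Fin d)))}
    (v : EuclideanSpace ℝ (Fin d)) (h : transTiling S v = transTiling S' v) : S = S' := by
  have h2 := congrArg (fun X => transTiling X (-v)) h
  simpa [transTiling_transTiling, transTiling_zero] using h2

lemma meetsTiles_transTiling {d : ℕ} (S : Set (Set (EuclideanSpace ℝ (Fin d))))
    (v : EuclideanSpace ℝ (Fin d)) (B : Set (EuclideanSpace ℝ (Fin d))) :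
    meetsTiles (transTiling S v) ((fun p => p + v) '' B) = transTiling (meetsTiles S B) v := by
  ext t
  simp only [meetsTiles, transTiling, Set.mem_image, Set.mem_setOf_eq]
  constructor
  · rintro ⟨⟨s, hs, rfl⟩, x, hx1, hx2⟩
    obtain ⟨a, ha, hax⟩ := hx1
    obtain ⟨b, hb, hbx⟩ := hx2
    have hab : a = b := add_right_cancel (hax.trans hbx.symm)
    exact ⟨s, ⟨hs, b, hab ▸ ha, hb⟩, rfl⟩
  · rintro ⟨s, ⟨hs, x, hx1, hx2⟩, rfl⟩
    exact ⟨⟨s, hs, rfl⟩, x + v, ⟨x, hx1, rfl⟩, ⟨x, hx2, rfl⟩⟩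

theorem stmt_7 {d : ℕ} (hd : 1 ≤ d) (P : Set (Set (EuclideanSpace ℝ (Fin d))))
    (hP : P.Finite)
    (T₁ : Set (Set (EuclideanSpace ℝ (Fin d)))) (h₁ : IsTiling P T₁) :
    (∀ ε : ℝ, 0 < ε → ε < 1 / Real.sqrt 2 →
      ∃ r' ε' : ℝ, 0 < r' ∧ 0 < ε' ∧
        ∀ T' : Set (Set (EuclideanSpace ℝ (Fin d))), IsTiling P T' →
          tilingDr r' T₁ T' < ENNReal.ofReal ε' → tilingMetric T₁ T' < ε) ∧
    (∀ r ε : ℝ, 0 < r → 0 < ε →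
      ∃ ε' : ℝ, 0 < ε' ∧
        ∀ T' : Set (Set (EuclideanSpace ℝ (Fin d))), IsTiling P T' →
          tilingMetric T₁ T' < ε' → tilingDr r T₁ T' < ENNReal.ofReal ε) := by
  have hsqrt2 : Real.sqrt 2 < 2 := by
    nlinarith [Real.sq_sqrt (by norm_num : (0:ℝ) ≤ 2), Real.sqrt_nonneg 2]
  have hsqrt2pos : (0:ℝ) < Real.sqrt 2 := Real.sqrt_pos.mpr (by norm_num)
  have hhalf : (1:ℝ)/2 < 1 / Real.sqrt 2 := by
    apply one_div_lt_one_div_of_lt hsqrt2pos hsqrt2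
  constructor
  · -- part (i)
    intro ε hε hεs
    refine ⟨2/ε, ε/2, by positivity, by positivity, ?_⟩
    intro T' hT' hlt
    rw [tilingDr] at hlt
    obtain ⟨ε₀, hlt⟩ := iInf_lt_iff.mp hlt
    obtain ⟨⟨hε₀, u, hu, heq⟩, hlt⟩ := iInf_lt_iff.mp hlt
    have hε₀' : ε₀ < ε/2 := by
      have := (ENNReal.ofReal_lt_ofReal_iff (by positivity)).mp hlt
      linarith
    set Sm : Set ℝ := ({1 / Real.sqrt 2} ∪
      {ε : ℝ | 0 < ε ∧ ∃ u v : EuclideanSpace ℝ (Fin d), ‖u‖ < ε ∧ ‖v‖ < ε ∧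
        meetsTiles (transTiling T₁ u) (Metric.ball 0 (1 / ε))
          = meetsTiles (transTiling T' v) (Metric.ball 0 (1 / ε))}) with hSm
    have hbdd : BddBelow Sm := by
      refine ⟨0, fun x hx => ?_⟩
      rcases hx with hx | hx
      · rw [Set.mem_singleton_iff] at hx; rw [hx]; positivity
      · exact hx.1.le
    have hmem : ε/2 ∈ Sm := by
      right
      refine ⟨by positivity, u, 0, lt_of_lt_of_le hu hε₀'.le, by simp; positivity, ?_⟩
      rw [transTiling_zero]
      have h12 : (1 : ℝ) / (ε/2) = 2/ε := by field_simp
      rw [h12]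
      exact meetsTiles_restrict Metric.ball_subset_closedBall heq
    have : tilingMetric T₁ T' ≤ ε/2 := csInf_le hbdd hmem
    linarith
  · -- part (ii)
    intro r ε hr hε
    refine ⟨min (ε/2) (min (1/2) (1/(r+1))), by positivity, ?_⟩
    set ε' : ℝ := min (ε/2) (min (1/2) (1/(r+1))) with hε'def
    intro T' hT' hlt
    rw [tilingMetric] at hlt
    have hne : ({1 / Real.sqrt 2} ∪
      {ε : ℝ | 0 < ε ∧ ∃ u v : EuclideanSpace ℝ (Fin d), ‖u‖ < ε ∧ ‖v‖ < ε ∧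
        meetsTiles (transTiling T₁ u) (Metric.ball 0 (1 / ε))
          = meetsTiles (transTiling T' v) (Metric.ball 0 (1 / ε))}).Nonempty :=
      ⟨1 / Real.sqrt 2, Or.inl rfl⟩
    obtain ⟨s, hsmem, hs⟩ := exists_lt_of_csInf_lt hne hlt
    have hshalf : s < 1/2 := lt_of_lt_of_le hs (le_trans (min_le_right _ _) (min_le_left _ _))
    rcases hsmem with hsm | ⟨hspos, u, v, hu, hv, heq⟩
    · rw [Set.mem_singleton_iff] at hsm
      exfalso; rw [hsm] at hshalf; linarith
    · have hsr : s < 1/(r+1) := lt_of_lt_of_le hs (le_trans (min_le_right _ _) (min_le_right _ _))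
      have hrs : r + 1 < 1/s := by
        have h2 := one_div_lt_one_div_of_lt hspos hsr
        rwa [one_div_one_div] at h2
      -- subset
      have hsub : (fun p => p + v) '' Metric.closedBall (0 : EuclideanSpace ℝ (Fin d)) r
          ⊆ Metric.ball 0 (1/s) := by
        rintro x ⟨p, hp, rfl⟩
        rw [Metric.mem_closedBall, dist_zero_right] at hp
        rw [Metric.mem_ball, dist_zero_right]
        have hnv : ‖v‖ < 1 := by linarith
        calc ‖p + v‖ ≤ ‖p‖ + ‖v‖ := norm_add_le _ _
          _ < r + 1 := by linarith
          _ < 1/s := hrs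
      have H' := meetsTiles_restrict hsub heq
      have h1 : meetsTiles (transTiling (transTiling T₁ (u - v)) v)
            ((fun p => p + v) '' Metric.closedBall (0 : EuclideanSpace ℝ (Fin d)) r)
          = meetsTiles (transTiling T' v)
            ((fun p => p + v) '' Metric.closedBall (0 : EuclideanSpace ℝ (Fin d)) r) := by
        rw [transTiling_transTiling, sub_add_cancel]
        exact H'
      rw [meetsTiles_transTiling, meetsTiles_transTiling] at h1
      have hkey := transTiling_inj v h1
      have hw : ‖u - v‖ < 2*s := by
        calc ‖u - v‖ ≤ ‖u‖ + ‖v‖ := norm_sub_le _ _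
          _ < 2*s := by linarith
      have hle : tilingDr r T₁ T' ≤ ENNReal.ofReal (2*s) := by
        rw [tilingDr]
        exact iInf_le_of_le (2*s) (iInf_le _ ⟨by linarith, u - v, hw, hkey⟩)
      refine lt_of_le_of_lt hle ?_
      rw [ENNReal.ofReal_lt_ofReal_iff hε]
      have : s < ε/2 := lt_of_lt_of_le hs (min_le_left _ _)
      linarith
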